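/- Let p be a prime and K a field of characteristic p. Let α, β ∈ K be nonzero with (α·β)^p = α·β. Let C = [[a,b],[c,d]] be a finite product of copies of A₀ and A₁ (so that, in particular, det C = 1, (c/β)^p = c/β and d^p = d) and suppose a ≠ 0. Then there exist m, n ∈ K with m^p = m and n^p = n such that the (2,1) entry of C · A₀(m) · A₁(n) equals 0, i.e., C · A₀(m) · A₁(n) is upper triangular. -/

import Mathlib

/-- If `α·β` lies in the prime subfield, any hash value `C` (a finite product
of the generalized Zémor generators `A₀ = !![1, α; 0, 1]` and `A₁ = !![1, 0; β, 1]`)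
with nonzero `(1,1)` entry can be extended by `A₀(m)·A₁(n) = !![1, m·α; 0, 1] * !![1, 0; n·β, 1]`
with `m`, `n` in the prime subfield to an upper triangular matrix. -/
theorem triangular_hash_extension (p : ℕ) [Fact p.Prime]
    (K : Type*) [Field K] [CharP K p] (α β : K) (hα : α ≠ 0) (hβ : β ≠ 0)
    (hab : (α * β) ^ p = α * β)
    (C : Matrix (Fin 2) (Fin 2) K)
    (hC : C ∈ Submonoid.closure
      {(!![1, α; 0, 1] : Matrix (Fin 2) (Fin 2) K), !![1, 0; β, 1]})
    (ha : C 0 0 ≠ 0) :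
    ∃ m n : K, m ^ p = m ∧ n ^ p = n ∧
      (C * !![1, m * α; 0, 1] * !![1, 0; n * β, 1]) 1 0 = 0 := by
  set φ := frobenius K p with hφdef
  have hab' : φ α * φ β = α * β := by
    show frobenius K p α * frobenius K p β = α * β
    rw [← map_mul, frobenius_def]; exact hab
  have hab'' : φ β * φ α = α * β := by rw [mul_comm]; exact hab'
  have key : ∀ M ∈ Submonoid.closure
      {(!![1, α; 0, 1] : Matrix (Fin 2) (Fin 2) K), !![1, 0; β, 1]},
      φ (M 0 0) = M 0 0 ∧ φ (M 0 1) * α = M 0 1 * φ α ∧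
      φ (M 1 0) * β = M 1 0 * φ β ∧ φ (M 1 1) = M 1 1 := by
    intro M hM
    induction hM using Submonoid.closure_induction with
    | mem x hx =>
      rcases hx with h | h <;> subst h <;>
        simp [Matrix.cons_val_zero, Matrix.cons_val_one, mul_comm]
    | one => simp [Matrix.one_apply]
    | mul x y hx hy ihx ihy =>
      obtain ⟨h1, h2, h3, h4⟩ := ihx
      obtain ⟨g1, g2, g3, g4⟩ := ihy
      have hne : α * β ≠ 0 := mul_ne_zero hα hβ
      simp only [Matrix.mul_apply, Fin.sum_univ_two, map_add, map_mul]
      refine ⟨?_, ?_, ?_, ?_⟩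
      · have h : (φ (x 0 1) * φ (y 1 0)) * (α * β) =
            (x 0 1 * y 1 0) * (α * β) := by
          linear_combination (φ (y 1 0) * β) * h2 + (x 0 1 * φ α) * g3 +
            (x 0 1 * y 1 0) * hab'
        have := mul_right_cancel₀ hne h
        linear_combination φ (y 0 0) * h1 + x 0 0 * g1 + this
      · linear_combination φ (y 0 1) * α * h1 + x 0 0 * g2 + φ (y 1 1) * h2 +
          x 0 1 * φ α * g4
      · linear_combination φ (y 0 0) * h3 + x 1 0 * φ β * g1 + φ (y 1 0) * β * h4 +
          x 1 1 * g3
      · have h : (φ (x 1 0) * φ (y 0 1)) * (α * β) =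
            (x 1 0 * y 0 1) * (α * β) := by
          linear_combination (φ (y 0 1) * α) * h3 + (x 1 0 * φ β) * g2 +
            (x 1 0 * y 0 1) * hab''
        have := mul_right_cancel₀ hne h
        linear_combination this + φ (y 1 1) * h4 + x 1 1 * g4
  obtain ⟨h1, h2, h3, h4⟩ := key C hC
  have hfix : ∀ x : K, φ x = x → x ^ p = x := by
    intro x hx; rwa [hφdef, frobenius_def] at hx
  have hp0 : (0 : K) ^ p = 0 := zero_pow (Fact.out : p.Prime).ne_zero
  by_cases hc : C 1 0 = 0
  · refine ⟨0, 0, hp0, hp0, ?_⟩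
    simp [Matrix.mul_apply, Fin.sum_univ_two, hc]
  by_cases hd : C 1 1 = 0
  · -- d = 0, take m = 1, n = -(α*β)⁻¹
    refine ⟨1, -(α * β)⁻¹, one_pow p, hfix _ ?_, ?_⟩
    · rw [map_neg, map_inv₀, map_mul, hab']
    · have hne : α * β ≠ 0 := mul_ne_zero hα hβ
      simp only [Matrix.mul_apply, Fin.sum_univ_two, Matrix.cons_val_zero,
        Matrix.cons_val_one, Matrix.head_cons, Matrix.head_fin_const,
        Matrix.cons_val_fin_one, Matrix.of_apply, hd]
      field_simp
      ring
  · -- d ≠ 0, take m = 0, n = -(C 1 0 / (C 1 1 * β))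
    refine ⟨0, -(C 1 0 / (C 1 1 * β)), hp0, hfix _ ?_, ?_⟩
    · rw [map_neg, map_div₀, map_mul, h4]
      have : φ (C 1 0) = C 1 0 * φ β / β := by
        field_simp; linear_combination h3
      rw [this]
      have hφβ : φ β ≠ 0 := by
        simpa [hφdef, frobenius_def] using pow_ne_zero p hβ
      field_simp
    · simp only [Matrix.mul_apply, Fin.sum_univ_two, Matrix.cons_val_zero,
        Matrix.cons_val_one, Matrix.head_cons, Matrix.head_fin_const,
        Matrix.cons_val_fin_one, Matrix.of_apply]
      field_simp
      ring
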